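/- The differential operators $L_1:=(\partial_z+w)B_2(\partial_w)-A_2(\partial_w)$ and $L_2:=(\partial_w+z)B_1(\partial_z)-A_1(\partial_z)$, acting on smooth functions of $(z,w)$, commute: $[L_1,L_2]=0$. -/

import Mathlib

open MvPolynomial

lemma pderiv_comm_01 (p : MvPolynomial (Fin 2) ℂ) :
    pderiv (0 : Fin 2) (pderiv 1 p) = pderiv 1 (pderiv 0 p) := by
  induction p using MvPolynomial.induction_on' with
  | monomial s a =>
      simp only [pderiv_monomial]
      rw [show s - Finsupp.single 1 1 - Finsupp.single 0 1
            = s - Finsupp.single 0 1 - Finsupp.single 1 1 by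
        rw [tsub_tsub, tsub_tsub, add_comm]]
      congr 1
      have h0 : (s - Finsupp.single (1:Fin 2) 1 : Fin 2 →₀ ℕ) 0 = s 0 := by
        simp [Finsupp.tsub_apply]
      have h1 : (s - Finsupp.single (0:Fin 2) 1 : Fin 2 →₀ ℕ) 1 = s 1 := by
        simp [Finsupp.tsub_apply]
      rw [h0, h1]; ring
  | add p q hp hq => simp [hp, hq]

lemma commute_aeval {x y : Module.End ℂ (MvPolynomial (Fin 2) ℂ)} (h : Commute x y)
    (p : Polynomial ℂ) : Commute x (Polynomial.aeval y p) := by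
  induction p using Polynomial.induction_on' with
  | add p q hp hq => simpa using hp.add_right hq
  | monomial n a =>
      simp only [Polynomial.aeval_monomial]
      exact Commute.mul_right ((Algebra.commutes a x).symm) (h.pow_right n)

/-- the differential operators `L₁ = (∂z+w)B₂(∂w) - A₂(∂w)` and
`L₂ = (∂w+z)B₁(∂z) - A₁(∂z)` commute (here realized on the space of polynomials in the
two variables `z, w`). -/
theorem stmt_6 (A1 B1 A2 B2 : Polynomial ℂ) :
    letI V := MvPolynomial (Fin 2) ℂ
    letI Dz : Module.End ℂ V := (MvPolynomial.pderiv (0 : Fin 2)).toLinearMap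
    letI Dw : Module.End ℂ V := (MvPolynomial.pderiv (1 : Fin 2)).toLinearMap
    letI Mz : Module.End ℂ V := LinearMap.mulLeft ℂ (MvPolynomial.X 0)
    letI Mw : Module.End ℂ V := LinearMap.mulLeft ℂ (MvPolynomial.X 1)
    letI L1 : Module.End ℂ V :=
      (Dz + Mw) * Polynomial.aeval Dw B2 - Polynomial.aeval Dw A2
    letI L2 : Module.End ℂ V :=
      (Dw + Mz) * Polynomial.aeval Dz B1 - Polynomial.aeval Dz A1
    L1 * L2 = L2 * L1 := by
  set Dz : Module.End ℂ (MvPolynomial (Fin 2) ℂ) := (MvPolynomial.pderiv (0 : Fin 2)).toLinearMap with hDz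
  set Dw : Module.End ℂ (MvPolynomial (Fin 2) ℂ) := (MvPolynomial.pderiv (1 : Fin 2)).toLinearMap with hDw
  set Mz : Module.End ℂ (MvPolynomial (Fin 2) ℂ) := LinearMap.mulLeft ℂ (MvPolynomial.X 0) with hMz
  set Mw : Module.End ℂ (MvPolynomial (Fin 2) ℂ) := LinearMap.mulLeft ℂ (MvPolynomial.X 1) with hMw
  have hDzDw : Commute Dz Dw := LinearMap.ext fun p => by
    simpa [hDz, hDw, Module.End.mul_apply] using pderiv_comm_01 p
  have hDzMw : Commute Dz Mw := LinearMap.ext fun p => by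
    simp [hDz, hMw, Module.End.mul_apply, pderiv_mul,
      pderiv_X_of_ne (show (1:Fin 2) ≠ 0 by decide)]
  have hDwMz : Commute Dw Mz := LinearMap.ext fun p => by
    simp [hDw, hMz, Module.End.mul_apply, pderiv_mul,
      pderiv_X_of_ne (show (0:Fin 2) ≠ 1 by decide)]
  have hMzMw : Commute Mz Mw := LinearMap.ext fun p => by
    simp [hMz, hMw, Module.End.mul_apply, mul_left_comm]
  have hDzMz : Dz * Mz = Mz * Dz + 1 := LinearMap.ext fun p => by
    simp [hDz, hMz, Module.End.mul_apply, pderiv_mul]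
  have hDwMw : Dw * Mw = Mw * Dw + 1 := LinearMap.ext fun p => by
    simp [hDw, hMw, Module.End.mul_apply, pderiv_mul]
  set a : Module.End ℂ (MvPolynomial (Fin 2) ℂ) := Dz + Mw with ha
  set b : Module.End ℂ (MvPolynomial (Fin 2) ℂ) := Dw + Mz with hb
  set P := Polynomial.aeval Dw B2
  set A := Polynomial.aeval Dw A2
  set Q := Polynomial.aeval Dz B1
  set B := Polynomial.aeval Dz A1
  have haDz : Commute a Dz := (Commute.refl Dz).add_left hDzMw.symm
  have hbDw : Commute b Dw := (Commute.refl Dw).add_left hDwMz.symm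
  have hab : Commute a b := by
    show a * b = b * a
    rw [ha, hb, add_mul, add_mul, mul_add, mul_add, mul_add, mul_add,
      hDzDw.eq, hDzMz, hMzMw.eq, show Mw * Dw = Dw * Mw - 1 by
        rw [hDwMw]; abel]
    abel
  have haQ : Commute a Q := commute_aeval haDz B1
  have haB : Commute a B := commute_aeval haDz A1
  have hPb : Commute P b := (commute_aeval hbDw B2).symm
  have hDwQ : Commute Dw Q := commute_aeval hDzDw.symm B1
  have hDwB : Commute Dw B := commute_aeval hDzDw.symm A1
  have hPQ : Commute P Q := (commute_aeval hDwQ.symm B2).symm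
  have hPB : Commute P B := (commute_aeval hDwB.symm B2).symm
  have hAb : Commute A b := (commute_aeval hbDw A2).symm
  have hAQ : Commute A Q := (commute_aeval hDwQ.symm A2).symm
  have hAB : Commute A B := (commute_aeval hDwB.symm A2).symm
  have h1 : Commute (a * P) (b * Q) :=
    (hab.mul_right haQ).mul_left (hPb.mul_right hPQ)
  have h2 : Commute (a * P) B := haB.mul_left hPB
  have h3 : Commute A (b * Q) := hAb.mul_right hAQ
  exact (h1.sub_right h2).sub_left (h3.sub_right hAB)
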